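/- Let β > 0, θ, ω ∈ ℝ, and set z = e^{-β-iω}. Then |1 − z cos θ| / |1 − 2z cos θ + z²| ≥ (1 − e^{-β}) / 4. -/

import Mathlib

/-- **Lower frame bound for the damped wave kernel.**
For `β > 0`, `θ, ω ∈ ℝ` and `z = e^{-β-iω}`, one has
`|1 − z cos θ| / |1 − 2z cos θ + z²| ≥ (1 − e^{-β}) / 4`. -/
theorem damped_wave_kernel_lower_bound (β θ ω : ℝ) (hβ : 0 < β)
    (z : ℂ) (hz : z = Complex.exp (-(β : ℂ) - Complex.I * ω)) :
    (1 - Real.exp (-β)) / 4 ≤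
      ‖1 - z * Real.cos θ‖ /
        ‖1 - 2 * z * Real.cos θ + z ^ 2‖ := by
  have hzabs : ‖z‖ = Real.exp (-β) := by
    rw [hz, Complex.norm_exp]
    norm_num
  have hz1 : Real.exp (-β) < 1 := by
    rw [Real.exp_lt_one_iff]; linarith
  have hzpos : (0:ℝ) < Real.exp (-β) := Real.exp_pos _
  have hcabs : ‖((Real.cos θ : ℂ))‖ ≤ 1 := by
    rw [Complex.norm_real, Real.norm_eq_abs]
    exact Real.abs_cos_le_one θ
  have hzc : ‖z * (Real.cos θ : ℂ)‖ ≤ Real.exp (-β) := by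
    rw [norm_mul, hzabs]
    nlinarith [norm_nonneg ((Real.cos θ : ℂ))]
  -- numerator lower bound
  have hnum : 1 - Real.exp (-β) ≤ ‖1 - z * Real.cos θ‖ := by
    have h := norm_sub_norm_le (1:ℂ) (z * (Real.cos θ : ℂ))
    simp only [norm_one] at h
    linarith
  -- factorization of denominator
  have hfac : (1 : ℂ) - 2 * z * Real.cos θ + z ^ 2 =
      (1 - z * Complex.exp ((θ:ℂ) * Complex.I)) *
      (1 - z * Complex.exp (-(θ:ℂ) * Complex.I)) := by
    have h1 : Complex.exp ((θ:ℂ) * Complex.I) * Complex.exp (-(θ:ℂ) * Complex.I) = 1 := by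
      rw [← Complex.exp_add]; ring_nf; exact Complex.exp_zero
    have h2 : Complex.exp ((θ:ℂ) * Complex.I) + Complex.exp (-(θ:ℂ) * Complex.I)
        = 2 * (Real.cos θ : ℂ) := by
      rw [Complex.ofReal_cos, Complex.cos]
      ring
    calc (1 : ℂ) - 2 * z * Real.cos θ + z ^ 2
        = 1 - z * (Complex.exp ((θ:ℂ) * Complex.I) + Complex.exp (-(θ:ℂ) * Complex.I))
            + z^2 * (Complex.exp ((θ:ℂ) * Complex.I) * Complex.exp (-(θ:ℂ) * Complex.I)) := by
          rw [h1, h2]; ring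
      _ = _ := by ring
  have habs_exp : ∀ s : ℝ, ‖Complex.exp ((s:ℂ) * Complex.I)‖ = 1 := by
    intro s
    rw [Complex.norm_exp]
    simp
  have hfac1 : 1 - Real.exp (-β) ≤ ‖1 - z * Complex.exp ((θ:ℂ) * Complex.I)‖ := by
    have h := norm_sub_norm_le (1:ℂ) (z * Complex.exp ((θ:ℂ) * Complex.I))
    rw [norm_one, norm_mul, hzabs, habs_exp θ] at h
    linarith
  have hfac2 : 1 - Real.exp (-β) ≤ ‖1 - z * Complex.exp (-(θ:ℂ) * Complex.I)‖ := by
    have h := norm_sub_norm_le (1:ℂ) (z * Complex.exp (-(θ:ℂ) * Complex.I))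
    have : ‖Complex.exp (-(θ:ℂ) * Complex.I)‖ = 1 := by
      rw [Complex.norm_exp]
      simp
    rw [norm_one, norm_mul, hzabs, this] at h
    linarith
  have hDpos : 0 < ‖1 - 2 * z * Real.cos θ + z ^ 2‖ := by
    rw [hfac, norm_mul]
    have h1 : (0:ℝ) < 1 - Real.exp (-β) := by linarith
    exact mul_pos (lt_of_lt_of_le h1 hfac1) (lt_of_lt_of_le h1 hfac2)
  have hD4 : ‖1 - 2 * z * Real.cos θ + z ^ 2‖ ≤ 4 := by
    have h1 : ‖(1:ℂ) - 2 * z * Real.cos θ + z ^ 2‖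
        ≤ ‖(1:ℂ) - 2 * z * Real.cos θ‖ + ‖z ^ 2‖ :=
      norm_add_le _ _
    have h2 : ‖(1:ℂ) - 2 * z * Real.cos θ‖
        ≤ ‖(1:ℂ)‖ + ‖(2 * z * Real.cos θ : ℂ)‖ :=
      norm_sub_le _ _
    have h3 : ‖2 * z * (Real.cos θ : ℂ)‖ ≤ 2 * Real.exp (-β) := by
      have : (2:ℂ) * z * (Real.cos θ : ℂ) = 2 * (z * (Real.cos θ : ℂ)) := by ring
      rw [this, norm_mul]
      simp only [Complex.norm_two]
      nlinarith
    have h4 : ‖z ^ 2‖ ≤ 1 := by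
      rw [norm_pow, hzabs]
      nlinarith
    simp only [norm_one] at h2
    linarith
  exact div_le_div₀ (le_trans (by linarith) hnum) hnum hDpos hD4
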